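/- Let n ≥ 2 be even and consider the non-periodic Toda system on ℝ^{n−1} × ℝⁿ: Ẋ_i = X_i(u_i − u_{i+1}) for 1 ≤ i ≤ n−1, and u̇_i = X_{i−1} − X_i for 1 ≤ i ≤ n, with the conventions X₀ = 0 and Xₙ = 0. Define M = { (X₁,...,X_{n−1},u₁,...,uₙ) : there exist X, u₁*, u₂* ∈ ℝ with X_i = X for all odd i, X_i = 0 for all even i, u_i = u₁* for all odd i, u_i = u₂* for all even i }. Then M is invariant under the dynamics: any solution with initial condition in M remains in M for all time, and on M the dynamics reduces to the three-dimensional system Ẋ = X(u₁* − u₂*), u̇₁* = −X, u̇₂* = X. -/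

import Mathlib

open Set

private lemma toda_abs_sub_le (a b : ℝ) : |a - b| ≤ |a| + |b| := by
  calc |a - b| = |a + -b| := by rw [sub_eq_add_neg]
    _ ≤ |a| + |-b| := abs_add_le _ _
    _ = |a| + |b| := by rw [abs_neg]

private lemma toda_ode_zero {V : Type*} [NormedAddCommGroup V] [NormedSpace ℝ V]
    (E D : ℝ → V) (hE : ∀ t, HasDerivAt E (D t) t)
    (hb : ∀ T : ℝ, 0 < T → ∃ K : ℝ, 0 ≤ K ∧ ∀ t ∈ Set.Icc (-T) T, ‖D t‖ ≤ K * ‖E t‖)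
    (h0 : E 0 = 0) : ∀ t : ℝ, E t = 0 := by
  intro t
  obtain ⟨K, hK0, hK⟩ := hb (|t| + 1) (by positivity)
  set T : ℝ := |t| + 1 with hT
  have hTpos : 0 < T := by positivity
  have fwd : ∀ s ∈ Set.Icc (0:ℝ) T, ‖E s‖ ≤ gronwallBound 0 K 0 (s - 0) := by
    apply norm_le_gronwallBound_of_norm_deriv_right_le
    · exact fun s _ => (hE s).continuousAt.continuousWithinAt
    · exact fun s _ => (hE s).hasDerivWithinAt
    · simp [h0]
    · intro s hs
      have hmem : s ∈ Set.Icc (-T) T := ⟨by linarith [hs.1], le_of_lt hs.2⟩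
      simpa using hK s hmem
  have hD' : ∀ s : ℝ, HasDerivAt (fun τ => E (-τ)) (-D (-s)) s := by
    intro s
    have h1 := (hE (-s)).scomp s (hasDerivAt_neg' (x := s))
    simpa [Function.comp_def] using h1
  have bwd : ∀ s ∈ Set.Icc (0:ℝ) T, ‖E (-s)‖ ≤ gronwallBound 0 K 0 (s - 0) := by
    apply norm_le_gronwallBound_of_norm_deriv_right_le (f := fun τ => E (-τ))
      (f' := fun s => -D (-s))
    · exact fun s _ => (hD' s).continuousAt.continuousWithinAt
    · exact fun s _ => (hD' s).hasDerivWithinAt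
    · simp [h0]
    · intro s hs
      have hmem : -s ∈ Set.Icc (-T) T := ⟨by linarith [hs.2], by linarith [hs.1]⟩
      simpa using hK (-s) hmem
  rcases le_or_gt 0 t with h | h
  · have h2 := fwd t ⟨h, by rw [hT]; linarith [le_abs_self t]⟩
    rw [gronwallBound_ε0_δ0] at h2
    exact norm_le_zero_iff.mp h2
  · have h2 := bwd (-t) ⟨by linarith, by rw [hT]; linarith [neg_le_abs t]⟩
    rw [gronwallBound_ε0_δ0, neg_neg] at h2
    exact norm_le_zero_iff.mp h2

/-- For the non-periodic Toda lattice with an even number `n = m + 1 ≥ 2` of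
particles, in Flaschka-type variables
(`Ẋᵢ = Xᵢ(uᵢ − uᵢ₊₁)`, `u̇ᵢ = Xᵢ₋₁ − Xᵢ` with boundary conventions
`X₀ = Xₙ = 0`; indices numbered from `0`), the set
`M = {(X,0,…,X,0,X, u₁,u₂,…,u₁,u₂)}` is invariant under the dynamics, and on
`M` the dynamics reduces to the three-dimensional system
`Ẋ = X(u₁ − u₂)`, `u̇₁ = −X`, `u̇₂ = X`. -/
theorem todaOpen_M_invariant_and_reduced_dynamics
    (m : ℕ) (heven : Even (m + 1))
    (X : ℝ → Fin m → ℝ) (u : ℝ → Fin (m + 1) → ℝ)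
    (hX : ∀ (t : ℝ) (i : Fin m),
      HasDerivAt (fun τ : ℝ => X τ i)
        (X t i * (u t i.castSucc - u t i.succ)) t)
    (hu : ∀ (t : ℝ) (i : Fin (m + 1)),
      HasDerivAt (fun τ : ℝ => u τ i)
        ((if h : 0 < i.val then X t ⟨i.val - 1, by omega⟩ else 0)
          - (if h : i.val < m then X t ⟨i.val, h⟩ else 0)) t)
    (hinit : ∃ X₀ u₁₀ u₂₀ : ℝ,
      (∀ i : Fin m, X 0 i = if i.val % 2 = 0 then X₀ else 0) ∧
      (∀ i : Fin (m + 1), u 0 i = if i.val % 2 = 0 then u₁₀ else u₂₀)) :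
    ∃ c v₁ v₂ : ℝ → ℝ,
      (∀ (t : ℝ) (i : Fin m), X t i = if i.val % 2 = 0 then c t else 0) ∧
      (∀ (t : ℝ) (i : Fin (m + 1)), u t i = if i.val % 2 = 0 then v₁ t else v₂ t) ∧
      (∀ t : ℝ, HasDerivAt c (c t * (v₁ t - v₂ t)) t) ∧
      (∀ t : ℝ, HasDerivAt v₁ (-(c t)) t) ∧
      (∀ t : ℝ, HasDerivAt v₂ (c t) t) := by
  obtain ⟨X₀, u₁₀, u₂₀, hX0, hu0⟩ := hinit
  have hmodd : m % 2 = 1 := by obtain ⟨k, hk⟩ := heven; omega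
  have hm1 : 0 < m := by omega
  set c : ℝ → ℝ := fun t => X t ⟨0, hm1⟩ with hc
  set v₁ : ℝ → ℝ := fun t => u t ⟨0, by omega⟩ with hv₁
  set v₂ : ℝ → ℝ := fun t => u t ⟨1, by omega⟩ with hv₂
  -- derivatives of the reduced variables
  have hcd : ∀ t, HasDerivAt c (c t * (v₁ t - v₂ t)) t := fun t => hX t ⟨0, hm1⟩
  have hv₁d : ∀ t, HasDerivAt v₁ (0 - c t) t := by
    intro t
    have h := hu t ⟨0, by omega⟩
    rwa [dif_neg (by omega : ¬ (0:ℕ) < 0), dif_pos hm1] at h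
  have hv₂d : ∀ t, HasDerivAt v₂
      (c t - (if h : 1 < m then X t ⟨1, h⟩ else 0)) t := by
    intro t
    have h := hu t ⟨1, by omega⟩
    rwa [dif_pos (by omega : (0:ℕ) < 1)] at h
  -- the error function
  set E : ℝ → (Fin m ⊕ Fin (m+1)) → ℝ :=
    fun t => Sum.elim (fun i => X t i - if i.val % 2 = 0 then c t else 0)
                      (fun i => u t i - if i.val % 2 = 0 then v₁ t else v₂ t) with hE
  set D : ℝ → (Fin m ⊕ Fin (m+1)) → ℝ :=
    fun t => Sum.elim
      (fun i => X t i * (u t i.castSucc - u t i.succ)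
          - if i.val % 2 = 0 then c t * (v₁ t - v₂ t) else 0)
      (fun i => ((if h : 0 < i.val then X t ⟨i.val - 1, by omega⟩ else 0)
          - (if h : i.val < m then X t ⟨i.val, h⟩ else 0))
          - if i.val % 2 = 0 then (0 - c t)
            else (c t - (if h : 1 < m then X t ⟨1, h⟩ else 0))) with hD
  have hED : ∀ t, HasDerivAt E (D t) t := by
    intro t
    rw [hasDerivAt_pi]
    rintro (i | i)
    · refine HasDerivAt.sub (hX t i) ?_
      by_cases h : i.val % 2 = 0
      · simpa [h] using hcd t
      · simpa [h] using hasDerivAt_const t (0:ℝ)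
    · refine HasDerivAt.sub (hu t i) ?_
      by_cases h : i.val % 2 = 0
      · simpa [h] using hv₁d t
      · simpa [h] using hv₂d t
  have hE0 : E 0 = 0 := by
    funext j
    have hc0 : c 0 = X₀ := by
      rw [hc]; simpa using hX0 ⟨0, hm1⟩
    have hv₁0 : v₁ 0 = u₁₀ := by
      rw [hv₁]; simpa using hu0 ⟨0, by omega⟩
    have hv₂0 : v₂ 0 = u₂₀ := by
      rw [hv₂]; simpa using hu0 ⟨1, by omega⟩
    rcases j with i | i
    · simp only [hE, Sum.elim_inl, Pi.zero_apply, hX0 i, hc0]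
      split_ifs <;> ring
    · simp only [hE, Sum.elim_inr, Pi.zero_apply, hu0 i, hv₁0, hv₂0]
      split_ifs <;> ring
  have hbound : ∀ T : ℝ, 0 < T → ∃ K : ℝ, 0 ≤ K ∧
      ∀ t ∈ Set.Icc (-T) T, ‖D t‖ ≤ K * ‖E t‖ := by
    intro T hT
    have hcont : Continuous (fun t => (Sum.elim (X t) (u t) : Fin m ⊕ Fin (m+1) → ℝ)) := by
      apply continuous_pi
      rintro (i | i)
      · exact continuous_iff_continuousAt.2 fun t => (hX t i).continuousAt
      · exact continuous_iff_continuousAt.2 fun t => (hu t i).continuousAt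
    obtain ⟨C0, hC0⟩ := (isCompact_Icc (a := -T) (b := T)).exists_bound_of_continuousOn
      hcont.continuousOn
    set C : ℝ := max C0 0 with hCdef
    have hCnn : 0 ≤ C := le_max_right _ _
    have hXb : ∀ t ∈ Set.Icc (-T) T, ∀ i : Fin m, |X t i| ≤ C := by
      intro t ht i
      have h1 : |X t i| ≤ C0 := by
        simpa [Real.norm_eq_abs] using
          (norm_le_pi_norm (Sum.elim (X t) (u t)) (Sum.inl i)).trans (hC0 t ht)
      exact h1.trans (le_max_left _ _)
    have hub : ∀ t ∈ Set.Icc (-T) T, ∀ i : Fin (m+1), |u t i| ≤ C := by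
      intro t ht i
      have h1 : |u t i| ≤ C0 := by
        simpa [Real.norm_eq_abs] using
          (norm_le_pi_norm (Sum.elim (X t) (u t)) (Sum.inr i)).trans (hC0 t ht)
      exact h1.trans (le_max_left _ _)
    refine ⟨4 * C + 4, by positivity, ?_⟩
    intro t ht
    have hN : (0:ℝ) ≤ ‖E t‖ := norm_nonneg _
    set N : ℝ := ‖E t‖ with hNdef
    have hEb : ∀ j, |E t j| ≤ N := by
      intro j
      simpa [Real.norm_eq_abs, hNdef] using norm_le_pi_norm (E t) j
    have hcb : |c t| ≤ C := hXb t ht ⟨0, hm1⟩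
    rw [pi_norm_le_iff_of_nonneg (by positivity)]
    rintro (i | i) <;> rw [Real.norm_eq_abs]
    · -- X components
      by_cases h : i.val % 2 = 0
      · have h2 : ¬ ((i.val + 1) % 2 = 0) := by omega
        have hid : D t (Sum.inl i) = E t (Sum.inl i) * (u t i.castSucc - u t i.succ)
            + c t * (E t (Sum.inr i.castSucc) - E t (Sum.inr i.succ)) := by
          simp only [hD, hE, Sum.elim_inl, Sum.elim_inr, Fin.coe_castSucc, Fin.val_succ,
            if_pos h, if_neg h2]
          ring
        calc |D t (Sum.inl i)|
            ≤ |E t (Sum.inl i)| * |u t i.castSucc - u t i.succ|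
              + |c t| * |E t (Sum.inr i.castSucc) - E t (Sum.inr i.succ)| := by
              rw [hid]
              refine (abs_add_le _ _).trans ?_
              rw [abs_mul, abs_mul]
          _ ≤ N * (C + C) + C * (N + N) := by
              gcongr
              · exact hEb _
              · exact (toda_abs_sub_le _ _).trans (add_le_add (hub t ht _) (hub t ht _))
              · exact (toda_abs_sub_le _ _).trans (add_le_add (hEb _) (hEb _))
          _ ≤ (4 * C + 4) * N := by nlinarith
      · have hid : D t (Sum.inl i) = E t (Sum.inl i) * (u t i.castSucc - u t i.succ) := by
          simp only [hD, hE, Sum.elim_inl, if_neg h]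
          ring
        calc |D t (Sum.inl i)|
            ≤ |E t (Sum.inl i)| * |u t i.castSucc - u t i.succ| := by rw [hid, abs_mul]
          _ ≤ N * (C + C) := by
              gcongr
              · exact hEb _
              · exact (toda_abs_sub_le _ _).trans (add_le_add (hub t ht _) (hub t ht _))
          _ ≤ (4 * C + 4) * N := by nlinarith
    · -- u components
      by_cases h : i.val % 2 = 0
      · by_cases h0 : i.val = 0
        · have hid : D t (Sum.inr i) = 0 := by
            simp only [hD, Sum.elim_inr, h0]
            rw [dif_neg (by omega : ¬ (0:ℕ) < 0), dif_pos hm1, if_pos trivial]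
            have hcc : X t ⟨0, hm1⟩ = c t := rfl
            rw [hcc]; ring
          rw [hid, abs_zero]
          positivity
        · have hlt : i.val < m := by omega
          have hp1 : ¬ ((i.val - 1) % 2 = 0) := by omega
          have hid : D t (Sum.inr i) = E t (Sum.inl ⟨i.val - 1, by omega⟩)
              - E t (Sum.inl ⟨i.val, hlt⟩) := by
            simp only [hD, hE, Sum.elim_inr, Sum.elim_inl, Fin.val_mk]
            rw [dif_pos (by omega : 0 < i.val), dif_pos hlt, if_pos h, if_neg hp1, if_pos h]
            ring
          calc |D t (Sum.inr i)| ≤ |E t (Sum.inl ⟨i.val - 1, by omega⟩)|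
                + |E t (Sum.inl ⟨i.val, hlt⟩)| := by rw [hid]; exact toda_abs_sub_le _ _
            _ ≤ N + N := add_le_add (hEb _) (hEb _)
            _ ≤ (4 * C + 4) * N := by nlinarith
      · by_cases h1 : i.val = 1
        · have hid : D t (Sum.inr i) = 0 := by
            simp only [hD, Sum.elim_inr, h1]
            rw [dif_pos (by omega : 0 < 1), if_neg (by norm_num : ¬ ((1:ℕ) % 2 = 0))]
            norm_num [hc]
          rw [hid, abs_zero]
          positivity
        · have h3 : 3 ≤ i.val := by omega
          have h1m : 1 < m := by omega
          by_cases him : i.val = m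
          · have hid : D t (Sum.inr i) = E t (Sum.inl ⟨m - 1, by omega⟩)
                + E t (Sum.inl ⟨1, h1m⟩) := by
              simp only [hD, hE, Sum.elim_inr, Sum.elim_inl, Fin.val_mk, him]
              rw [dif_pos (by omega : 0 < m), dif_neg (by omega : ¬ m < m), dif_pos h1m,
                if_neg (by omega : ¬ (m % 2 = 0)), if_pos (by omega : (m - 1) % 2 = 0),
                if_neg (by norm_num : ¬ ((1:ℕ) % 2 = 0))]
              ring
            calc |D t (Sum.inr i)| ≤ |E t (Sum.inl ⟨m - 1, by omega⟩)|
                  + |E t (Sum.inl ⟨1, h1m⟩)| := by rw [hid]; exact abs_add_le _ _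
              _ ≤ N + N := add_le_add (hEb _) (hEb _)
              _ ≤ (4 * C + 4) * N := by nlinarith
          · have hlt : i.val < m := by omega
            have hid : D t (Sum.inr i) = E t (Sum.inl ⟨i.val - 1, by omega⟩)
                - E t (Sum.inl ⟨i.val, hlt⟩) + E t (Sum.inl ⟨1, h1m⟩) := by
              simp only [hD, hE, Sum.elim_inr, Sum.elim_inl, Fin.val_mk]
              rw [dif_pos (by omega : 0 < i.val), dif_pos hlt, dif_pos h1m,
                if_neg h, if_pos (by omega : (i.val - 1) % 2 = 0), if_neg h,
                if_neg (by norm_num : ¬ ((1:ℕ) % 2 = 0))]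
              ring
            calc |D t (Sum.inr i)| ≤ |E t (Sum.inl ⟨i.val - 1, by omega⟩)
                  - E t (Sum.inl ⟨i.val, hlt⟩)| + |E t (Sum.inl ⟨1, h1m⟩)| := by
                  rw [hid]; exact abs_add_le _ _
              _ ≤ (N + N) + N := add_le_add
                  ((toda_abs_sub_le _ _).trans (add_le_add (hEb _) (hEb _))) (hEb _)
              _ ≤ (4 * C + 4) * N := by nlinarith
  have hEzero : ∀ t, E t = 0 := toda_ode_zero E D hED hbound hE0
  have hXpat : ∀ (t : ℝ) (i : Fin m), X t i = if i.val % 2 = 0 then c t else 0 := by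
    intro t i
    have h := congrFun (hEzero t) (Sum.inl i)
    simpa [hE, sub_eq_zero] using h
  have hupat : ∀ (t : ℝ) (i : Fin (m+1)), u t i = if i.val % 2 = 0 then v₁ t else v₂ t := by
    intro t i
    have h := congrFun (hEzero t) (Sum.inr i)
    simpa [hE, sub_eq_zero] using h
  refine ⟨c, v₁, v₂, hXpat, hupat, hcd, ?_, ?_⟩
  · intro t
    simpa using hv₁d t
  · intro t
    have h := hv₂d t
    have hz : (if h : 1 < m then X t ⟨1, h⟩ else 0) = 0 := by
      split_ifs with h1
      · simpa using hXpat t ⟨1, h1⟩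
      · rfl
    rwa [hz, sub_zero] at h
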